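/- Let K be a positive natural number, let c₁, …, c_K ∈ ℂ, let N₀ > 0 be a real number, and fix k ∈ {1, …, K}. Define e : ℂ → ℝ by e(u) = |u·c_k − 1|² + Σ_{i≠k} |u·c_i|² + N₀|u|², and SINR_k = |c_k|² / (Σ_{i≠k} |c_i|² + N₀). Then sup over u ∈ ℂ and ω > 0 of (log ω − ω·e(u) + 1) equals log(1 + SINR_k), and the supremum is attained at u* = conj(c_k)/(Σ_{i=1}^K |c_i|² + N₀) and ω* = 1/e(u*). -/

import Mathlib

open scoped BigOperators

/-- The WMMSE rate–MSE equivalence: sup_{u ∈ ℂ, ω > 0} (log ω − ω e(u) + 1)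
equals log(1 + SINR_k), attained at the MMSE receiver u* and weight ω* = e(u*)⁻¹. -/
theorem stmt9 (K : ℕ) (c : Fin K → ℂ) (N₀ : ℝ) (hN₀ : 0 < N₀) (k : Fin K)
    (e : ℂ → ℝ)
    (he : ∀ u : ℂ, e u =
      ‖u * c k - 1‖ ^ 2 + (∑ i ∈ Finset.univ.erase k, ‖u * c i‖ ^ 2) + N₀ * ‖u‖ ^ 2)
    (SINR : ℝ)
    (hS : SINR = ‖c k‖ ^ 2 / ((∑ i ∈ Finset.univ.erase k, ‖c i‖ ^ 2) + N₀))
    (uStar : ℂ)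
    (hu : uStar = (starRingEnd ℂ) (c k) / (((∑ i, ‖c i‖ ^ 2) + N₀ : ℝ) : ℂ))
    (wStar : ℝ) (hw : wStar = (e uStar)⁻¹) :
    IsGreatest {r : ℝ | ∃ (u : ℂ) (w : ℝ), 0 < w ∧ r = Real.log w - w * e u + 1}
      (Real.log (1 + SINR)) ∧
    (0 < wStar ∧ Real.log wStar - wStar * e uStar + 1 = Real.log (1 + SINR)) := by
  have hmemk := Finset.mem_univ k
  have hn : ∀ z : ℂ, ‖z‖ ^ 2 = z.re ^ 2 + z.im ^ 2 := by
    intro z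
    rw [Complex.sq_norm, Complex.normSq_apply]; ring
  set S : ℝ := (∑ i ∈ Finset.univ.erase k, ‖c i‖ ^ 2) + N₀ with hSdef
  set T : ℝ := (∑ i, ‖c i‖ ^ 2) + N₀ with hTdef
  have hsumnn : (0:ℝ) ≤ ∑ i ∈ Finset.univ.erase k, ‖c i‖ ^ 2 :=
    Finset.sum_nonneg fun i _ => by positivity
  have hS0 : 0 < S := by rw [hSdef]; linarith
  have hTS : T = S + ‖c k‖ ^ 2 := by
    rw [hTdef, hSdef, ← Finset.sum_erase_add Finset.univ _ hmemk]; ring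
  have hT0 : 0 < T := by rw [hTS]; positivity
  have hsum_erase : ∑ i ∈ Finset.univ.erase k, ‖c i‖ ^ 2 = S - N₀ := by
    rw [hSdef]; ring
  clear hSdef hTdef
  clear_value S T
  have key : ∀ u : ℂ, e u = T * Complex.normSq (u - uStar) + S / T := by
    intro u
    have sum_eq : ∑ i ∈ Finset.univ.erase k, ‖u * c i‖ ^ 2
        = (u.re ^ 2 + u.im ^ 2) * (S - N₀) := by
      rw [← hsum_erase, Finset.mul_sum]
      refine Finset.sum_congr rfl fun i _ => ?_
      rw [norm_mul, mul_pow, hn u]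
    have hSval : S = T - ((c k).re ^ 2 + (c k).im ^ 2) := by
      rw [hTS, hn (c k)]; ring
    rw [he u, sum_eq, hu, hSval]
    rw [hn (u * c k - 1), hn u]
    simp only [Complex.normSq_apply, Complex.sub_re, Complex.sub_im, Complex.mul_re,
      Complex.mul_im, Complex.one_re, Complex.one_im, Complex.div_re, Complex.div_im,
      Complex.conj_re, Complex.conj_im, Complex.ofReal_re, Complex.ofReal_im,
      Complex.normSq_ofReal]
    field_simp
    ring
  have heStar : e uStar = S / T := by
    rw [key uStar, sub_self, map_zero, mul_zero, zero_add]
  have hwval : wStar = T / S := by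
    rw [hw, heStar, inv_div]
  have hw0 : 0 < wStar := by rw [hwval]; positivity
  have hlog : Real.log (1 + SINR) = Real.log (T / S) := by
    congr 1
    rw [hS, hTS, add_div, div_self hS0.ne']
  have hval : Real.log wStar - wStar * e uStar + 1 = Real.log (1 + SINR) := by
    rw [hlog, hwval, heStar]
    rw [div_mul_div_comm, mul_comm T S, div_self (by positivity)]
    ring
  refine ⟨⟨⟨uStar, wStar, hw0, hval.symm⟩, ?_⟩, hw0, hval⟩
  rintro r ⟨u, w, hwpos, rfl⟩
  have h1 : S / T ≤ e u := by
    have := Complex.normSq_nonneg (u - uStar)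
    rw [key u]
    nlinarith
  have h2 : Real.log (w * (S / T)) ≤ w * (S / T) - 1 :=
    Real.log_le_sub_one_of_pos (by positivity)
  rw [Real.log_mul hwpos.ne' (div_pos hS0 hT0).ne',
    Real.log_div hS0.ne' hT0.ne'] at h2
  rw [hlog, Real.log_div hT0.ne' hS0.ne']
  have h3 : w * (S / T) ≤ w * e u := mul_le_mul_of_nonneg_left h1 hwpos.le
  linarith
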